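/- Let (𝒪,𝒜,T,e,≼) be a Direct Preference Process where ≼ is expressed by a reward function r: ℋ → ℝ. A policy π is ≼-optimal if and only if for every attainable history h_t, V_π(h_t; r) = sup_{π'} V_{π'}(h_t; r), where V_π(h_t; r) = 𝔼_π[Σ_{s=t}^T r(H_s) | H_t = h_t]. -/

import Mathlib

open Finset

/-- A history: an initial observation together with a list of action-observation pairs. -/
abbrev Hist (O A : Type*) := O × List (A × O)

/-- The length (time index) of a history. -/
def hlen {O A : Type*} (h : Hist O A) : ℕ := h.2.length

/-- Append an action-observation pair to a history. -/
def hext {O A : Type*} (h : Hist O A) (a : A) (o : O) : Hist O A :=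
  (h.1, h.2 ++ [(a, o)])

/-- The length-`t` prefix of a history/trajectory. -/
def hpre {O A : Type*} (h : Hist O A) (t : ℕ) : Hist O A := (h.1, h.2.take t)

section DPP

variable {O A : Type*} [Fintype O] [Fintype A] [DecidableEq O] [DecidableEq A]

/-- The finite set of all length-`T` histories (trajectories). -/
def trajFinset (O A : Type*) [Fintype O] [Fintype A] [DecidableEq O] [DecidableEq A]
    (T : ℕ) : Finset (Hist O A) :=
  Finset.image (fun p : O × (Fin T → A × O) => ((p.1, List.ofFn p.2) : Hist O A))
    Finset.univ

/-- `π` is a policy: a distribution over actions for each history. -/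
def IsPolicy (π : Hist O A → A → ℝ) : Prop :=
  ∀ h, (∀ a, 0 ≤ π h a) ∧ ∑ a, π h a = 1

/-- `(ρ0, ρ)` is an environment: an initial observation distribution and
history-dependent transition probabilities. -/
def IsEnv (ρ0 : O → ℝ) (ρ : Hist O A → A → O → ℝ) : Prop :=
  ((∀ o, 0 ≤ ρ0 o) ∧ ∑ o, ρ0 o = 1) ∧
    ∀ h a, (∀ o, 0 ≤ ρ h a o) ∧ ∑ o, ρ h a o = 1

/-- `Dpi ρ π n h` : the distribution over trajectories induced by starting at `h`
(with `n` steps remaining) and following policy `π` in environment `ρ`. -/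
noncomputable def Dpi (ρ : Hist O A → A → O → ℝ) (π : Hist O A → A → ℝ) :
    ℕ → Hist O A → Hist O A → ℝ
  | 0, h, ω => if ω = h then 1 else 0
  | n + 1, h, ω => ∑ a, π h a * ∑ o, ρ h a o * Dpi ρ π n (hext h a o) ω

/-- `D^π(h)` with horizon `T`. -/
noncomputable def DpiH (T : ℕ) (ρ : Hist O A → A → O → ℝ) (π : Hist O A → A → ℝ)
    (h : Hist O A) : Hist O A → ℝ :=
  Dpi ρ π (T - hlen h) h

/-- `D^π(h · a)` : take action `a` at `h`, then follow `π`. -/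
noncomputable def DpiA (T : ℕ) (ρ : Hist O A → A → O → ℝ) (π : Hist O A → A → ℝ)
    (h : Hist O A) (a : A) : Hist O A → ℝ :=
  fun ω => ∑ o, ρ h a o * Dpi ρ π (T - hlen h - 1) (hext h a o) ω

/-- Attainable histories in environment `(ρ0, ρ)`. -/
inductive Attainable (ρ0 : O → ℝ) (ρ : Hist O A → A → O → ℝ) : Hist O A → Prop
  | base (o : O) : 0 < ρ0 o → Attainable ρ0 ρ (o, ([] : List (A × O)))
  | step (h : Hist O A) (a : A) (o : O) :
      Attainable ρ0 ρ h → 0 < ρ h a o → Attainable ρ0 ρ (hext h a o)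

/-- A distribution over trajectories (length-`T` histories). -/
def IsTrajDist (T : ℕ) (D : Hist O A → ℝ) : Prop :=
  (∀ ω, 0 ≤ D ω) ∧ (∀ ω, D ω ≠ 0 → hlen ω = T) ∧
    ∑ ω ∈ trajFinset O A T, D ω = 1

/-- A distribution over the attainable trajectories `Ω^e`. -/
def IsAttDist (T : ℕ) (ρ0 : O → ℝ) (ρ : Hist O A → A → O → ℝ)
    (D : Hist O A → ℝ) : Prop :=
  IsTrajDist T D ∧ ∀ ω, D ω ≠ 0 → Attainable ρ0 ρ ω

/-- Pointwise convex combination. -/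
def mix {X : Type*} (α : ℝ) (A B : X → ℝ) : X → ℝ :=
  fun x => α * A x + (1 - α) * B x

/-- The restriction of `R` to `Dist(Ω^e)` is a total consistent preorder. -/
def RestrTotalConsistentPreorder (T : ℕ) (ρ0 : O → ℝ)
    (ρ : Hist O A → A → O → ℝ) (R : (Hist O A → ℝ) → (Hist O A → ℝ) → Prop) : Prop :=
  (∀ D, IsAttDist T ρ0 ρ D → R D D) ∧
  (∀ D₁ D₂ D₃, IsAttDist T ρ0 ρ D₁ → IsAttDist T ρ0 ρ D₂ → IsAttDist T ρ0 ρ D₃ →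
    R D₁ D₂ → R D₂ D₃ → R D₁ D₃) ∧
  (∀ D₁ D₂, IsAttDist T ρ0 ρ D₁ → IsAttDist T ρ0 ρ D₂ → (R D₁ D₂ ∨ R D₂ D₁)) ∧
  (∀ α : ℝ, 0 < α → α < 1 → ∀ D₁ D₂ D₃, IsAttDist T ρ0 ρ D₁ →
    IsAttDist T ρ0 ρ D₂ → IsAttDist T ρ0 ρ D₃ →
    R D₁ D₂ → R (mix α D₁ D₃) (mix α D₂ D₃))

/-- `π` is a `≼`-optimal policy. -/
def OptimalPolicy (T : ℕ) (ρ0 : O → ℝ) (ρ : Hist O A → A → O → ℝ)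
    (R : (Hist O A → ℝ) → (Hist O A → ℝ) → Prop) (π : Hist O A → A → ℝ) : Prop :=
  ∀ h, Attainable ρ0 ρ h → hlen h ≤ T →
    ∀ π', IsPolicy π' → R (DpiH T ρ π' h) (DpiH T ρ π h)

/-- The optimal action set of policy `π` at history `h`. -/
def OptActions (T : ℕ) (ρ : Hist O A → A → O → ℝ)
    (R : (Hist O A → ℝ) → (Hist O A → ℝ) → Prop) (π : Hist O A → A → ℝ)
    (h : Hist O A) : Set A :=
  {a | ∀ a', R (DpiA T ρ π h a') (DpiA T ρ π h a)}

end DPP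

/-- Expected total reward `𝔼_D[Σ_{t=0}^T r(H_t)]` of a trajectory distribution. -/
noncomputable def expTotalReward {O A : Type*} [Fintype O] [Fintype A]
    [DecidableEq O] [DecidableEq A] (T : ℕ) (r : Hist O A → ℝ)
    (D : Hist O A → ℝ) : ℝ :=
  ∑ ω ∈ trajFinset O A T, D ω * ∑ t ∈ Finset.range (T + 1), r (hpre ω t)

/-- The reward function `r` expresses the relation `R`. -/
def Expresses {O A : Type*} [Fintype O] [Fintype A] [DecidableEq O] [DecidableEq A]
    (T : ℕ) (r : Hist O A → ℝ) (R : (Hist O A → ℝ) → (Hist O A → ℝ) → Prop) : Prop :=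
  ∀ D₁ D₂ : Hist O A → ℝ, IsTrajDist T D₁ → IsTrajDist T D₂ →
    (R D₁ D₂ ↔ expTotalReward T r D₁ ≤ expTotalReward T r D₂)

/-- The `r`-value `V_π(h; r) = 𝔼_π[Σ_{s=t}^T r(H_s) | H_t = h]`. -/
noncomputable def Vval {O A : Type*} [Fintype O] [Fintype A]
    [DecidableEq O] [DecidableEq A] (T : ℕ) (ρ : Hist O A → A → O → ℝ)
    (r : Hist O A → ℝ) (π : Hist O A → A → ℝ) (h : Hist O A) : ℝ :=
  ∑ ω ∈ trajFinset O A T, DpiH T ρ π h ω * ∑ s ∈ Finset.Icc (hlen h) T, r (hpre ω s)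

section AuxLemmas

set_option linter.unusedSectionVars false
variable {O A : Type*} [Fintype O] [Fintype A] [DecidableEq O] [DecidableEq A]

lemma hlen_hext (h : Hist O A) (a : A) (o : O) : hlen (hext h a o) = hlen h + 1 := by
  simp [hlen, hext]

lemma mem_trajFinset {T : ℕ} {ω : Hist O A} : ω ∈ trajFinset O A T ↔ hlen ω = T := by
  constructor
  · rintro hm
    simp only [trajFinset, Finset.mem_image] at hm
    obtain ⟨p, -, rfl⟩ := hm
    simp [hlen]
  · intro hl
    obtain ⟨o0, l⟩ := ω
    simp only [hlen] at hl
    subst hl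
    simp only [trajFinset, Finset.mem_image]
    exact ⟨(o0, l.get), Finset.mem_univ _, by simp [List.ofFn_get]⟩

variable {ρ : Hist O A → A → O → ℝ} {π : Hist O A → A → ℝ}

lemma dpi_nonneg (hρ : ∀ h a, (∀ o, 0 ≤ ρ h a o) ∧ ∑ o, ρ h a o = 1)
    (hπ : IsPolicy π) : ∀ n (h ω : Hist O A), 0 ≤ Dpi ρ π n h ω := by
  intro n
  induction n with
  | zero => intro h ω; simp only [Dpi]; positivity
  | succ n ih =>
    intro h ω
    simp only [Dpi]
    refine Finset.sum_nonneg fun a _ => mul_nonneg ((hπ h).1 a) ?_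
    exact Finset.sum_nonneg fun o _ => mul_nonneg ((hρ h a).1 o) (ih _ _)

lemma dpi_support : ∀ n (h ω : Hist O A), Dpi ρ π n h ω ≠ 0 →
    hlen ω = hlen h + n ∧ ∀ t ≤ hlen h, hpre ω t = hpre h t := by
  intro n
  induction n with
  | zero =>
    intro h ω hne
    simp only [Dpi, ne_eq, ite_eq_right_iff, not_forall] at hne
    obtain ⟨rfl, -⟩ := hne
    exact ⟨rfl, fun t _ => rfl⟩
  | succ n ih =>
    intro h ω hne
    simp only [Dpi] at hne
    obtain ⟨a, -, ha⟩ := Finset.exists_ne_zero_of_sum_ne_zero hne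
    have h2 : (∑ o, ρ h a o * Dpi ρ π n (hext h a o) ω) ≠ 0 := right_ne_zero_of_mul ha
    obtain ⟨o, -, ho⟩ := Finset.exists_ne_zero_of_sum_ne_zero h2
    have h3 : Dpi ρ π n (hext h a o) ω ≠ 0 := right_ne_zero_of_mul ho
    obtain ⟨hlen', hpre'⟩ := ih _ _ h3
    rw [hlen_hext] at hlen'
    refine ⟨by omega, fun t ht => ?_⟩
    rw [hpre' t (by rw [hlen_hext]; omega)]
    simp only [hpre, hext]
    rw [List.take_append_of_le_length ht]

lemma dpi_sum (hρ : ∀ h a, (∀ o, 0 ≤ ρ h a o) ∧ ∑ o, ρ h a o = 1)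
    (hπ : IsPolicy π) {T : ℕ} : ∀ n (h : Hist O A), hlen h + n = T →
    ∑ ω ∈ trajFinset O A T, Dpi ρ π n h ω = 1 := by
  intro n
  induction n with
  | zero =>
    intro h hT
    simp only [Dpi]
    rw [Finset.sum_ite_eq' (trajFinset O A T) h (fun _ => (1:ℝ))]
    rw [if_pos (mem_trajFinset.mpr (by omega))]
  | succ n ih =>
    intro h hT
    simp only [Dpi]
    rw [Finset.sum_comm]
    have : ∀ a, ∑ ω ∈ trajFinset O A T, π h a * ∑ o, ρ h a o * Dpi ρ π n (hext h a o) ω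
        = π h a := by
      intro a
      rw [← Finset.mul_sum, Finset.sum_comm]
      have : ∀ o, ∑ ω ∈ trajFinset O A T, ρ h a o * Dpi ρ π n (hext h a o) ω = ρ h a o := by
        intro o
        rw [← Finset.mul_sum, ih (hext h a o) (by rw [hlen_hext]; omega), mul_one]
      rw [Finset.sum_congr rfl fun o _ => this o, (hρ h a).2, mul_one]
    rw [Finset.sum_congr rfl fun a _ => this a, (hπ h).2]

lemma isTrajDist_DpiH (hρ : ∀ h a, (∀ o, 0 ≤ ρ h a o) ∧ ∑ o, ρ h a o = 1)
    (hπ : IsPolicy π) {T : ℕ} {h : Hist O A} (hle : hlen h ≤ T) :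
    IsTrajDist T (DpiH T ρ π h) := by
  refine ⟨fun ω => dpi_nonneg hρ hπ _ _ _, fun ω hω => ?_, ?_⟩
  · have := (dpi_support _ _ _ hω).1
    omega
  · exact dpi_sum hρ hπ _ _ (by omega)

lemma expTotal_DpiH (hρ : ∀ h a, (∀ o, 0 ≤ ρ h a o) ∧ ∑ o, ρ h a o = 1)
    (hπ : IsPolicy π) {T : ℕ} {h : Hist O A} (hle : hlen h ≤ T) (r : Hist O A → ℝ) :
    expTotalReward T r (DpiH T ρ π h) =
      (∑ t ∈ Finset.range (hlen h), r (hpre h t)) + Vval T ρ r π h := by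
  have hsplit : ∀ ω : Hist O A, ∑ t ∈ Finset.range (T + 1), r (hpre ω t)
      = (∑ t ∈ Finset.range (hlen h), r (hpre ω t)) + ∑ s ∈ Finset.Icc (hlen h) T, r (hpre ω s) := by
    intro ω
    rw [Finset.range_eq_Ico, Finset.range_eq_Ico, ← Finset.Ico_add_one_right_eq_Icc,
      Finset.sum_Ico_consecutive (fun t => r (hpre ω t)) (Nat.zero_le _) (by omega : hlen h ≤ T + 1)]
  unfold expTotalReward Vval
  have key : ∀ ω ∈ trajFinset O A T,
      DpiH T ρ π h ω * ∑ t ∈ Finset.range (T + 1), r (hpre ω t)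
      = DpiH T ρ π h ω * (∑ t ∈ Finset.range (hlen h), r (hpre h t))
        + DpiH T ρ π h ω * ∑ s ∈ Finset.Icc (hlen h) T, r (hpre ω s) := by
    intro ω _
    by_cases hω : DpiH T ρ π h ω = 0
    · simp [hω]
    · have hp := (dpi_support _ _ _ hω).2
      rw [hsplit ω, mul_add]
      congr 2
      exact Finset.sum_congr rfl fun t ht => by
        rw [hp t (le_of_lt (Finset.mem_range.mp ht))]
  rw [Finset.sum_congr rfl key, Finset.sum_add_distrib]
  congr 1
  rw [← Finset.sum_mul]
  simp only [DpiH]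
  rw [dpi_sum hρ hπ _ _ (by omega), one_mul]

end AuxLemmas

/-- with goals expressed by reward, optimality is equivalent to
attaining the supremal value at every attainable history. -/
theorem optimal_iff_value_sup {O A : Type*} [Fintype O] [Fintype A]
    [DecidableEq O] [DecidableEq A] [Nonempty O] [Nonempty A]
    (T : ℕ) (ρ0 : O → ℝ) (ρ : Hist O A → A → O → ℝ) (henv : IsEnv ρ0 ρ)
    (R : (Hist O A → ℝ) → (Hist O A → ℝ) → Prop)
    (r : Hist O A → ℝ) (hr : Expresses T r R)
    (π : Hist O A → A → ℝ) (hπ : IsPolicy π) :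
    OptimalPolicy T ρ0 ρ R π ↔
      ∀ h, Attainable ρ0 ρ h → hlen h ≤ T →
        Vval T ρ r π h =
          sSup {v : ℝ | ∃ π' : Hist O A → A → ℝ, IsPolicy π' ∧ v = Vval T ρ r π' h} := by
  have hρ := henv.2
  have hRV : ∀ h : Hist O A, hlen h ≤ T → ∀ π₁ π₂ : Hist O A → A → ℝ,
      IsPolicy π₁ → IsPolicy π₂ →
      (R (DpiH T ρ π₁ h) (DpiH T ρ π₂ h) ↔ Vval T ρ r π₁ h ≤ Vval T ρ r π₂ h) := by
    intro h hle π₁ π₂ h1 h2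
    rw [hr _ _ (isTrajDist_DpiH hρ h1 hle) (isTrajDist_DpiH hρ h2 hle),
      expTotal_DpiH hρ h1 hle r, expTotal_DpiH hρ h2 hle r]
    constructor <;> intro <;> linarith
  constructor
  · intro hopt h hatt hle
    have hub : ∀ v ∈ {v : ℝ | ∃ π' : Hist O A → A → ℝ, IsPolicy π' ∧ v = Vval T ρ r π' h},
        v ≤ Vval T ρ r π h := by
      rintro v ⟨π', hπ', rfl⟩
      exact (hRV h hle π' π hπ' hπ).mp (hopt h hatt hle π' hπ')
    have hmem : Vval T ρ r π h ∈
        {v : ℝ | ∃ π' : Hist O A → A → ℝ, IsPolicy π' ∧ v = Vval T ρ r π' h} := ⟨π, hπ, rfl⟩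
    exact le_antisymm (le_csSup ⟨_, hub⟩ hmem) (csSup_le ⟨_, hmem⟩ hub)
  · intro hval h hatt hle π' hπ'
    refine (hRV h hle π' π hπ' hπ).mpr ?_
    rw [hval h hatt hle]
    refine le_csSup ?_ ⟨π', hπ', rfl⟩
    refine ⟨∑ ω ∈ trajFinset O A T, |∑ s ∈ Finset.Icc (hlen h) T, r (hpre ω s)|, ?_⟩
    rintro v ⟨π'', hπ'', rfl⟩
    unfold Vval
    refine Finset.sum_le_sum fun ω hω => ?_
    have hD := isTrajDist_DpiH hρ hπ'' hle (h := h)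
    have h0 : 0 ≤ DpiH T ρ π'' h ω := hD.1 ω
    have h1 : DpiH T ρ π'' h ω ≤ 1 := by
      have := Finset.single_le_sum (f := DpiH T ρ π'' h) (fun i _ => hD.1 i) hω
      rw [hD.2.2] at this; exact this
    calc DpiH T ρ π'' h ω * ∑ s ∈ Finset.Icc (hlen h) T, r (hpre ω s)
        ≤ DpiH T ρ π'' h ω * |∑ s ∈ Finset.Icc (hlen h) T, r (hpre ω s)| :=
          mul_le_mul_of_nonneg_left (le_abs_self _) h0
      _ ≤ 1 * |∑ s ∈ Finset.Icc (hlen h) T, r (hpre ω s)| :=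
          mul_le_mul_of_nonneg_right h1 (abs_nonneg _)
      _ = _ := one_mul _
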